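/- Let X be a finite set and F a family of subsets of X. If each element x of X is assigned a weight w(x) independently and uniformly at random from {1,...,M}, then with probability at least 1 - (|F| choose 2)/M, all sets in F have pairwise distinct total weights, i.e., for all distinct S1, S2 in F, the sum of w over S1 differs from the sum of w over S2. -/

import Mathlib

open Finset

lemma pair_count {α : Type*} [Fintype α] [DecidableEq α] (M : ℕ)
    (S₁ S₂ : Finset α) (x : α) (hx₁ : x ∈ S₁) (hx₂ : x ∉ S₂) :
    M * ((Fintype.piFinset fun _ : α => Finset.Icc 1 M).filter fun w =>
        ∑ y ∈ S₁, w y = ∑ y ∈ S₂, w y).card ≤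
      (Fintype.piFinset fun _ : α => Finset.Icc 1 M).card := by
  classical
  set Ω := Fintype.piFinset fun _ : α => Finset.Icc 1 M with hΩ
  set B := Ω.filter fun w => ∑ y ∈ S₁, w y = ∑ y ∈ S₂, w y with hB
  have hcard : (B ×ˢ Finset.Icc 1 M).card = B.card * M := by
    simp [Finset.card_product, Nat.card_Icc]
  rw [mul_comm, ← hcard]
  apply Finset.card_le_card_of_injOn (fun p => Function.update p.1 x p.2)
  · rintro ⟨w, v⟩ hp
    simp only [Finset.mem_coe, Finset.mem_product] at hp
    obtain ⟨hw, hv⟩ := hp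
    have hw' : w ∈ Ω := (Finset.mem_filter.1 hw).1
    rw [hΩ, Finset.mem_coe, Fintype.mem_piFinset]
    intro y
    rcases eq_or_ne y x with rfl | hy
    · simpa using hv
    · simp only [Function.update_of_ne hy]
      exact (Fintype.mem_piFinset.1 hw') y
  · rintro ⟨w, v⟩ hp ⟨w', v'⟩ hp' heq
    simp only [Finset.coe_product, Set.mem_prod, Finset.mem_coe] at hp hp'
    have hv : v = v' := by
      have := congrFun heq x
      simpa using this
    have hoff : ∀ y, y ≠ x → w y = w' y := by
      intro y hy
      have := congrFun heq y
      simpa [Function.update_of_ne hy] using this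
    have hS₂ : ∑ y ∈ S₂, w y = ∑ y ∈ S₂, w' y :=
      Finset.sum_congr rfl fun y hy => hoff y (fun h => hx₂ (h ▸ hy))
    have hE : ∑ y ∈ S₁.erase x, w y = ∑ y ∈ S₁.erase x, w' y :=
      Finset.sum_congr rfl fun y hy => hoff y (Finset.ne_of_mem_erase hy)
    have h1 : ∑ y ∈ S₁, w y = ∑ y ∈ S₂, w y := (Finset.mem_filter.1 hp.1).2
    have h1' : ∑ y ∈ S₁, w' y = ∑ y ∈ S₂, w' y := (Finset.mem_filter.1 hp'.1).2
    have hsum1 : w x + ∑ y ∈ S₁.erase x, w y = ∑ y ∈ S₁, w y :=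
      Finset.add_sum_erase _ _ hx₁
    have hsum1' : w' x + ∑ y ∈ S₁.erase x, w' y = ∑ y ∈ S₁, w' y :=
      Finset.add_sum_erase _ _ hx₁
    have hwx : w x = w' x := by omega
    have : w = w' := funext fun y => by
      rcases eq_or_ne y x with rfl | hy
      · exact hwx
      · exact hoff y hy
    simp [this, hv]

theorem randomized_separation_lemma {α : Type*} [Fintype α] [DecidableEq α]
    (F : Finset (Finset α)) (M : ℕ) (hM : 0 < M) :
    ((1 : ℝ) - (F.card.choose 2 : ℝ) / (M : ℝ)) *
        ((Fintype.piFinset fun _ : α => Finset.Icc 1 M).card : ℝ) ≤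
      (((Fintype.piFinset fun _ : α => Finset.Icc 1 M).filter fun w =>
          ∀ S₁ ∈ F, ∀ S₂ ∈ F, S₁ ≠ S₂ →
            ∑ x ∈ S₁, w x ≠ ∑ x ∈ S₂, w x).card : ℝ) := by
  classical
  set Ω := Fintype.piFinset fun _ : α => Finset.Icc 1 M with hΩ
  set G := Ω.filter fun w => ∀ S₁ ∈ F, ∀ S₂ ∈ F, S₁ ≠ S₂ →
      ∑ x ∈ S₁, w x ≠ ∑ x ∈ S₂, w x with hG
  set B := Ω.filter fun w => ¬ (∀ S₁ ∈ F, ∀ S₂ ∈ F, S₁ ≠ S₂ →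
      ∑ x ∈ S₁, w x ≠ ∑ x ∈ S₂, w x) with hBdef
  have hGB : G.card + B.card = Ω.card := Finset.card_filter_add_card_filter_not _
  -- ordered half of offDiag
  let e : Finset α ≃ Fin (Fintype.card (Finset α)) := Fintype.equivFin _
  set P := F.offDiag.filter (fun p => e p.1 < e p.2) with hP
  set Q := F.offDiag.filter (fun p => e p.2 < e p.1) with hQ
  have hPQ : P.card = Q.card := by
    apply Finset.card_bij (fun p _ => Prod.swap p)
    · rintro ⟨a, b⟩ hp
      simp only [hP, hQ, Finset.mem_filter, Finset.mem_offDiag] at hp ⊢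
      exact ⟨⟨hp.1.2.1, hp.1.1, fun h => hp.1.2.2 h.symm⟩, hp.2⟩
    · rintro ⟨a, b⟩ _ ⟨c, d⟩ _ h
      simpa [Prod.ext_iff, and_comm] using h
    · rintro ⟨a, b⟩ hq
      refine ⟨⟨b, a⟩, ?_, rfl⟩
      simp only [hP, hQ, Finset.mem_filter, Finset.mem_offDiag] at hq ⊢
      exact ⟨⟨hq.1.2.1, hq.1.1, fun h => hq.1.2.2 h.symm⟩, hq.2⟩
  have hsplit : P.card + Q.card = F.offDiag.card := by
    have : F.offDiag.filter (fun p => ¬ e p.1 < e p.2) = Q := by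
      apply Finset.filter_congr
      rintro ⟨a, b⟩ hab
      simp only [Finset.mem_offDiag] at hab
      constructor
      · intro h
        rcases lt_or_eq_of_le (not_lt.1 h) with h' | h'
        · exact h'
        · exact absurd (e.injective h') (fun hh => hab.2.2 hh.symm)
      · intro h; exact not_lt.2 h.le
    rw [← this]
    exact Finset.card_filter_add_card_filter_not _
  have hPcard : P.card = F.card.choose 2 := by
    have h2 : 2 * P.card = F.card * (F.card - 1) := by
      rw [Finset.offDiag_card, ← Nat.mul_sub_one] at hsplit; omega
    rw [Nat.choose_two_right]; omega
  -- union bound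
  have hBsub : B ⊆ P.biUnion fun p => Ω.filter fun w =>
      ∑ y ∈ p.1, w y = ∑ y ∈ p.2, w y := by
    intro w hw
    rw [hBdef, Finset.mem_filter] at hw
    obtain ⟨hwΩ, hbad⟩ := hw
    push_neg at hbad
    obtain ⟨S₁, h₁, S₂, h₂, hne, hsum⟩ := hbad
    rw [Finset.mem_biUnion]
    rcases lt_trichotomy (e S₁) (e S₂) with h | h | h
    · exact ⟨⟨S₁, S₂⟩, Finset.mem_filter.2 ⟨Finset.mem_offDiag.2 ⟨h₁, h₂, hne⟩, h⟩,
        Finset.mem_filter.2 ⟨hwΩ, hsum⟩⟩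
    · exact absurd (e.injective h) hne
    · exact ⟨⟨S₂, S₁⟩, Finset.mem_filter.2 ⟨Finset.mem_offDiag.2 ⟨h₂, h₁, hne.symm⟩, h⟩,
        Finset.mem_filter.2 ⟨hwΩ, hsum.symm⟩⟩
  have hMB : M * B.card ≤ F.card.choose 2 * Ω.card := by
    calc M * B.card ≤ M * ∑ p ∈ P, (Ω.filter fun w =>
          ∑ y ∈ p.1, w y = ∑ y ∈ p.2, w y).card :=
        Nat.mul_le_mul_left _ ((Finset.card_le_card hBsub).trans (Finset.card_biUnion_le))
      _ = ∑ p ∈ P, M * (Ω.filter fun w =>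
          ∑ y ∈ p.1, w y = ∑ y ∈ p.2, w y).card := Finset.mul_sum _ _ _
      _ ≤ ∑ _p ∈ P, Ω.card := by
          apply Finset.sum_le_sum
          rintro ⟨S₁, S₂⟩ hp
          rw [hP, Finset.mem_filter, Finset.mem_offDiag] at hp
          have hne : S₁ ≠ S₂ := hp.1.2.2
          by_cases hss : S₁ ⊆ S₂
          · have hns : ¬ S₂ ⊆ S₁ := fun h => hne (le_antisymm hss h)
            obtain ⟨x, hx₂, hx₁⟩ := Finset.not_subset.1 hns
            have hfe : (Ω.filter fun w => ∑ y ∈ S₁, w y = ∑ y ∈ S₂, w y) =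
                (Ω.filter fun w => ∑ y ∈ S₂, w y = ∑ y ∈ S₁, w y) := by
              apply Finset.filter_congr; intro w _; exact eq_comm
            rw [hfe]
            exact pair_count M S₂ S₁ x hx₂ hx₁
          · obtain ⟨x, hx₁, hx₂⟩ := Finset.not_subset.1 hss
            exact pair_count M S₁ S₂ x hx₁ hx₂
      _ = P.card * Ω.card := by rw [Finset.sum_const, smul_eq_mul]
      _ = F.card.choose 2 * Ω.card := by rw [hPcard]
  -- final arithmetic
  have hM' : (0:ℝ) < M := by exact_mod_cast hM
  have h1 : (M:ℝ) * B.card ≤ (F.card.choose 2 : ℝ) * Ω.card := by exact_mod_cast hMB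
  have hGr : (G.card:ℝ) = (Ω.card:ℝ) - B.card := by
    have := hGB; push_cast [← this]; ring
  have h2 : (B.card:ℝ) ≤ (F.card.choose 2 : ℝ) * Ω.card / M :=
    (le_div_iff₀ hM').2 (by linarith)
  rw [sub_mul, one_mul, div_mul_eq_mul_div]
  linarith
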